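/- For α ≥ 1, let A = [[1, 0], [α, 1]], W = diag(α, 1), and Ã = [[1, 0], [α + α⁻¹, 1]]. Then A_p = (Ã⁻¹ W Ã⁻ᵀ)(Aᵀ W⁻¹ A) equals [[1 − α, −1], [α² − α⁻¹ + 1, α + α⁻¹ + 1]], its eigenvalues are (2 + α⁻¹ ± √(4α⁻¹ + α⁻²))/2, and both eigenvalues tend to 1 as α → ∞. -/

import Mathlib

open Matrix

/-- for `α ≥ 1`, with `A = [[1,0],[α,1]]`, `W = diag(α,1)` and
`Ã = [[1,0],[α+α⁻¹,1]]`, the matrix `A_p = (Ã⁻¹ W Ã⁻ᵀ)(Aᵀ W⁻¹ A)` equals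
`[[1 − α, −1],[α² − α⁻¹ + 1, α + α⁻¹ + 1]]`, its eigenvalues are
`(2 + α⁻¹ ± √(4α⁻¹ + α⁻²))/2`, and both tend to `1` as `α → ∞`. -/
theorem stmt12 (A W Atil Ap : ℝ → Matrix (Fin 2) (Fin 2) ℝ)
    (hA : ∀ α : ℝ, A α = !![1, 0; α, 1])
    (hW : ∀ α : ℝ, W α = !![α, 0; 0, 1])
    (hAtil : ∀ α : ℝ, Atil α = !![1, 0; α + α⁻¹, 1])
    (hAp : ∀ α : ℝ, Ap α = ((Atil α)⁻¹ * W α * ((Atil α)⁻¹)ᵀ) *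
      ((A α)ᵀ * (W α)⁻¹ * A α)) :
    (∀ α : ℝ, 1 ≤ α →
      Ap α = !![1 - α, -1; α ^ 2 - α⁻¹ + 1, α + α⁻¹ + 1] ∧
      spectrum ℝ (Ap α) =
        {(2 + α⁻¹ + Real.sqrt (4 * α⁻¹ + α⁻¹ ^ 2)) / 2,
         (2 + α⁻¹ - Real.sqrt (4 * α⁻¹ + α⁻¹ ^ 2)) / 2}) ∧
    Filter.Tendsto (fun α : ℝ => (2 + α⁻¹ + Real.sqrt (4 * α⁻¹ + α⁻¹ ^ 2)) / 2)
      Filter.atTop (nhds 1) ∧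
    Filter.Tendsto (fun α : ℝ => (2 + α⁻¹ - Real.sqrt (4 * α⁻¹ + α⁻¹ ^ 2)) / 2)
      Filter.atTop (nhds 1) := by
  have hinv : Filter.Tendsto (fun α : ℝ => α⁻¹) Filter.atTop (nhds 0) :=
    tendsto_inv_atTop_zero
  have h1 : Filter.Tendsto (fun α : ℝ => 4 * α⁻¹ + α⁻¹ ^ 2) Filter.atTop (nhds 0) := by
    have := (hinv.const_mul 4).add (hinv.pow 2)
    simpa using this
  have h2 : Filter.Tendsto (fun α : ℝ => Real.sqrt (4 * α⁻¹ + α⁻¹ ^ 2))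
      Filter.atTop (nhds 0) := by
    have := (Real.continuous_sqrt.tendsto 0).comp h1
    simpa [Function.comp_def] using this
  refine ⟨fun α hα => ?_, ?_, ?_⟩
  · have h0 : α ≠ 0 := by linarith
    have hAtilinv : (Atil α)⁻¹ = !![1, 0; -(α + α⁻¹), 1] := by
      apply Matrix.inv_eq_right_inv
      rw [hAtil]
      ext i j; fin_cases i <;> fin_cases j <;>
        · simp [Matrix.mul_apply, Fin.sum_univ_two]; try ring
    have hWinv : (W α)⁻¹ = !![α⁻¹, 0; 0, 1] := by
      apply Matrix.inv_eq_right_inv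
      rw [hW]
      ext i j; fin_cases i <;> fin_cases j <;>
        · simp [Matrix.mul_apply, Fin.sum_univ_two]
          try field_simp
    have ht1 : (!![1, 0; -(α + α⁻¹), 1] : Matrix (Fin 2) (Fin 2) ℝ)ᵀ
        = !![1, -(α + α⁻¹); 0, 1] := by
      ext i j; fin_cases i <;> fin_cases j <;> simp
    have ht2 : (!![1, 0; α, 1] : Matrix (Fin 2) (Fin 2) ℝ)ᵀ = !![1, α; 0, 1] := by
      ext i j; fin_cases i <;> fin_cases j <;> simp
    have hApval : Ap α = !![1 - α, -1; α ^ 2 - α⁻¹ + 1, α + α⁻¹ + 1] := by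
      rw [hAp, hAtilinv, hWinv, hW, hA, ht1, ht2, Matrix.mul_fin_two, Matrix.mul_fin_two,
        Matrix.mul_fin_two, Matrix.mul_fin_two, Matrix.mul_fin_two]
      congr 1 <;> field_simp <;> ext i j <;> fin_cases i <;> fin_cases j <;> simp <;> field_simp <;> ring
    refine ⟨hApval, ?_⟩
    have hs : Real.sqrt (4 * α⁻¹ + α⁻¹ ^ 2) ^ 2 = 4 * α⁻¹ + α⁻¹ ^ 2 :=
      Real.sq_sqrt (by positivity)
    rw [hApval]
    ext μ
    rw [spectrum.mem_iff, Set.mem_insert_iff, Set.mem_singleton_iff,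
      (Matrix.isUnit_iff_isUnit_det _).not, isUnit_iff_ne_zero, not_not]
    have halg : (algebraMap ℝ (Matrix (Fin 2) (Fin 2) ℝ)) μ
        - !![1 - α, -1; α ^ 2 - α⁻¹ + 1, α + α⁻¹ + 1]
        = !![μ - (1 - α), 1; -(α ^ 2 - α⁻¹ + 1), μ - (α + α⁻¹ + 1)] := by
      ext i j; fin_cases i <;> fin_cases j <;>
        simp [Matrix.algebraMap_eq_diagonal, Matrix.diagonal]
    rw [halg, Matrix.det_fin_two_of]
    have hdet : (μ - (1 - α)) * (μ - (α + α⁻¹ + 1)) - 1 * -(α ^ 2 - α⁻¹ + 1)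
        = (μ - (2 + α⁻¹ + Real.sqrt (4 * α⁻¹ + α⁻¹ ^ 2)) / 2) *
          (μ - (2 + α⁻¹ - Real.sqrt (4 * α⁻¹ + α⁻¹ ^ 2)) / 2) := by
      linear_combination hs / 4 - mul_inv_cancel₀ h0
    rw [hdet, mul_eq_zero, sub_eq_zero, sub_eq_zero]
  · have := (((tendsto_const_nhds (x := (2 : ℝ))).add hinv).add h2).div_const 2
    norm_num [inv_pow] at this
    simpa [inv_pow] using this
  · have := (((tendsto_const_nhds (x := (2 : ℝ))).add hinv).sub h2).div_const 2
    norm_num [inv_pow] at this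
    simpa [inv_pow] using this
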